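/- (Key sub-claim of the prefix–suffix decomposition lemma's lower bound.) For every m with 0 ≤ m ≤ k, if Z is nonempty then there exists a prefix l ∈ L such that for every suffix r ∈ R the concatenation l⌢r (the k-mer whose first m characters are l and whose last k−m characters are r) is alive, i.e., S(l⌢r) > ε. -/
import Mathlib


open Finset

noncomputable def colMax {A : Type*} [Fintype A] [Nonempty A] (W : ℕ → A → ℝ) (h : ℕ) : ℝ :=
  Finset.univ.sup' Finset.univ_nonempty (W h)

noncomputable def score {A : Type*} (k : ℕ) (W : ℕ → A → ℝ) (w : Fin k → A) : ℝ :=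
  ∏ j : Fin k, W j (w j)

lemma colMax_eq_exists {A : Type*} [Fintype A] [Nonempty A] (W : ℕ → A → ℝ) (h : ℕ) :
    ∃ a : A, colMax W h = W h a := by
  obtain ⟨a, _, ha⟩ := Finset.exists_mem_eq_sup' (Finset.univ_nonempty (α := A)) (W h)
  exact ⟨a, ha⟩

lemma le_colMax {A : Type*} [Fintype A] [Nonempty A] (W : ℕ → A → ℝ) (h : ℕ) (a : A) :
    W h a ≤ colMax W h :=
  Finset.le_sup' (W h) (Finset.mem_univ a)

/-- Key sub-claim of the lower bound: if `Z` is nonempty, there is a prefix `l ∈ L` such that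
for every suffix `r ∈ R` the concatenation `l⌢r` is alive. -/
theorem exists_prefix_alive_with_all_suffixes
    {A : Type*} [Fintype A] [Nonempty A]
    (k : ℕ) (hk : 1 ≤ k) (W : ℕ → A → ℝ) (hW : ∀ j a, 0 ≤ W j a)
    (ε : ℝ) (hε : 0 ≤ ε) (m : ℕ) (hm : m ≤ k)
    (hZ : {w : Fin k → A | score k W w > ε}.Nonempty) :
    ∃ l : Fin m → A,
      (∏ j : Fin m, W j (l j)) * (∏ h ∈ Finset.Ico m k, colMax W h) > ε ∧
      ∀ r : Fin (k - m) → A,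
        (∏ h ∈ Finset.range m, colMax W h) * (∏ j : Fin (k - m), W (m + j) (r j)) > ε →
        score k W (fun i : Fin k =>
          if h : (i : ℕ) < m then l ⟨i, h⟩
          else r ⟨(i : ℕ) - m, by have := i.isLt; omega⟩) > ε := by
  classical
  choose g hg using colMax_eq_exists W
  refine ⟨fun j => g j, ?_, ?_⟩
  · -- prefix product equals ∏ colMax over range m
    have hpre : (∏ j : Fin m, W j (g j)) = ∏ h ∈ Finset.range m, colMax W h := by
      rw [← Fin.prod_univ_eq_prod_range (fun h => colMax W h) m]
      exact Finset.prod_congr rfl (fun j _ => (hg j).symm)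
    obtain ⟨w, hw⟩ := hZ
    have hle : score k W w ≤ ∏ h ∈ Finset.range k, colMax W h := by
      rw [← Fin.prod_univ_eq_prod_range (fun h => colMax W h) k]
      exact Finset.prod_le_prod (fun j _ => hW j (w j)) (fun j _ => le_colMax W j (w j))
    rw [hpre, Finset.prod_range_mul_prod_Ico _ hm]
    exact lt_of_lt_of_le hw hle
  · intro r hr
    set w : Fin k → A := fun i : Fin k =>
      if h : (i : ℕ) < m then g i
      else r ⟨(i : ℕ) - m, by have := i.isLt; omega⟩ with hwdef
    have hsplit : score k W w =
        (∏ h ∈ Finset.range m, colMax W h) * (∏ j : Fin (k - m), W (m + j) (r j)) := by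
      have : score k W w = ∏ j ∈ Finset.range k,
          (if h : j < k then W j (w ⟨j, h⟩) else 1) := by
        rw [← Fin.prod_univ_eq_prod_range]
        exact Finset.prod_congr rfl (fun i _ => by simp [i.isLt])
      rw [this, ← Finset.prod_range_mul_prod_Ico _ hm]
      congr 1
      · rw [show (∏ h ∈ Finset.range m, colMax W h)
              = ∏ j : Fin m, colMax W (j : ℕ) from
            (Fin.prod_univ_eq_prod_range (fun h => colMax W h) m).symm,
          show (∏ j ∈ Finset.range m, if h : j < k then W j (w ⟨j, h⟩) else 1)
              = ∏ j : Fin m, (if h : (j : ℕ) < k then W j (w ⟨j, h⟩) else 1) from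
            (Fin.prod_univ_eq_prod_range _ m).symm]
        refine Finset.prod_congr rfl (fun i _ => ?_)
        have h1 : (i : ℕ) < k := lt_of_lt_of_le i.isLt hm
        rw [dif_pos h1]
        simp only [hwdef]
        rw [dif_pos i.isLt, hg]
      · rw [Finset.prod_Ico_eq_prod_range]
        rw [show (∏ j : Fin (k - m), W (m + (j : ℕ)) (r j))
              = ∏ j ∈ Finset.range (k - m),
                  (if h : j < k - m then W (m + j) (r ⟨j, h⟩) else 1) from by
            rw [← Fin.prod_univ_eq_prod_range
              (fun j => if h : j < k - m then W (m + j) (r ⟨j, h⟩) else 1) (k - m)]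
            exact Finset.prod_congr rfl (fun i _ => by rw [dif_pos i.isLt])]
        refine Finset.prod_congr rfl (fun i hi => ?_)
        rw [Finset.mem_range] at hi
        have h1 : m + i < k := by omega
        rw [dif_pos h1, dif_pos hi]
        simp only [hwdef]
        rw [dif_neg (by omega : ¬ m + i < m)]
        congr 1
        simp
    rw [hsplit]
    exact hr
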